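/- Let f : ℤ → {0,1} be a weight diagram with n ≥ 1 black balls and c = f⁻¹(1). For every black-ball position i ∈ c, there exists an empty position j ∉ c with j < i such that i ∈ j⇢▼, i.e. r⁻(i,j) = 0 and r⁻(s,j) ≥ 0 for all j < s < i. (Every black ball is the target of at least one dashed arrow.) -/

import Mathlib

/-- The ±1 marker of a weight diagram `f : ℤ → {0,1}`: `g(i) = (-1)^(f(i)+1)`,
i.e. `1` on black balls and `-1` on empty positions. -/
def bg (f : ℤ → ℤ) (i : ℤ) : ℤ := if f i = 1 then 1 else -1

/-- `r⁺(i,j) = Σ_{s=j}^{i-1} g(s)`. -/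
noncomputable def rpl (f : ℤ → ℤ) (i j : ℤ) : ℤ := ∑ s ∈ Finset.Icc j (i - 1), bg f s

/-- `r⁻(i,j) = -Σ_{s=j+1}^{i} g(s)`. -/
noncomputable def rmi (f : ℤ → ℤ) (i j : ℤ) : ℤ := -∑ s ∈ Finset.Icc (j + 1) i, bg f s

/-- The set `⟵i▲(f)` of targets of solid arrows starting at position `i`:
`{j < i : r⁺(i,j) = 0 and r⁺(i,s) ≥ 0 for all j < s < i}`. -/
def solidT (f : ℤ → ℤ) (i : ℤ) : Set ℤ :=
  {j | j < i ∧ rpl f i j = 0 ∧ ∀ s, j < s → s < i → 0 ≤ rpl f i s}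

/-- The set `j⇢▼(f)` of targets of dashed arrows starting at position `j`:
`{i > j : r⁻(i,j) = 0 and r⁻(s,j) ≥ 0 for all j < s < i}`. -/
def dashT (f : ℤ → ℤ) (j : ℤ) : Set ℤ :=
  {i | j < i ∧ rmi f i j = 0 ∧ ∀ s, j < s → s < i → 0 ≤ rmi f s j}

/-- `f : ℤ → ℤ` is a weight diagram with `n` black balls: it takes values in `{0,1}`
and has exactly `n` positions with value `1`. -/
def IsWD (f : ℤ → ℤ) (n : ℕ) : Prop :=
  (∀ i, f i = 0 ∨ f i = 1) ∧ {i | f i = 1}.Finite ∧ {i | f i = 1}.ncard = n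

/-- In a weight diagram with `n ≥ 1` black balls, every black ball is the
target of at least one dashed arrow: for every `i` with `f i = 1` there is an empty
position `j < i` with `i ∈ j⇢▼`. -/
theorem stmt6 (n : ℕ) (hn : 1 ≤ n) (f : ℤ → ℤ) (hf : IsWD f n) (i : ℤ) (hi : f i = 1) :
    ∃ j, j < i ∧ f j ≠ 1 ∧ i ∈ dashT f j := by
  obtain ⟨hf01, hfin, hcard⟩ := hf
  set S : ℤ → ℤ := fun j => ∑ s ∈ Finset.Ioc j i, bg f s with hS
  have hIcc : ∀ a b : ℤ, Finset.Icc (a + 1) b = Finset.Ioc a b := by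
    intro a b; ext x; simp [Int.add_one_le_iff]
  have hrmi : ∀ s j : ℤ, rmi f s j = -∑ x ∈ Finset.Ioc j s, bg f x := by
    intro s j; rw [rmi, hIcc]
  have hbg : ∀ s : ℤ, bg f s = 1 ∨ bg f s = -1 := by
    intro s; unfold bg; split <;> simp
  have hcons : ∀ a b c : ℤ, a ≤ b → b ≤ c →
      (∑ x ∈ Finset.Ioc a b, bg f x) + (∑ x ∈ Finset.Ioc b c, bg f x)
        = ∑ x ∈ Finset.Ioc a c, bg f x := by
    intro a b c hab hbc
    rw [← Finset.sum_union, Finset.Ioc_union_Ioc_eq_Ioc hab hbc]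
    rw [Finset.disjoint_left]
    intro x hx hx'
    simp only [Finset.mem_Ioc] at hx hx'
    omega
  have hstep : ∀ j : ℤ, j < i → S j = bg f (j + 1) + S (j + 1) := by
    intro j hj
    have h1 := hcons j (j + 1) i (by omega) (by omega)
    have h2 : Finset.Ioc j (j + 1) = {j + 1} := by ext x; simp; omega
    rw [h2, Finset.sum_singleton] at h1
    simp only [hS, ← h1]
  have hsplit : ∀ s : ℤ, s ≤ i → ∀ j, j ≤ s →
      (∑ x ∈ Finset.Ioc j s, bg f x) = S j - S s := by
    intro s hs j hj
    have h1 := hcons j s i hj hs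
    simp only [hS]; omega
  have hSi : S i = 0 := by simp [hS]
  -- existence of a negative value
  have hneg : ∃ j, j < i ∧ S j < 0 := by
    refine ⟨i - (2 * n + 1), by omega, ?_⟩
    have hcardIoc : (Finset.Ioc (i - (2 * n + 1)) i).card = 2 * n + 1 := by
      rw [Int.card_Ioc]; omega
    have hbound : (∑ s ∈ Finset.Ioc (i - (2 * n + 1)) i, bg f s)
        = 2 * ((Finset.Ioc (i - (2 * n + 1)) i).filter (fun s => f s = 1)).card
          - (2 * n + 1) := by
      have : ∀ s : ℤ, bg f s = (if f s = 1 then (2 : ℤ) else 0) - 1 := by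
        intro s; unfold bg; split <;> simp
      rw [Finset.sum_congr rfl (fun s _ => this s), Finset.sum_sub_distrib,
        ← Finset.sum_filter]
      simp [hcardIoc, mul_comm, two_mul]
      omega
    have hsub : ((Finset.Ioc (i - (2 * n + 1)) i).filter (fun s => f s = 1))
        ⊆ hfin.toFinset := by
      intro x hx
      simp only [Finset.mem_filter] at hx
      simp [Set.Finite.mem_toFinset, hx.2]
    have hcardle := Finset.card_le_card hsub
    have htf : hfin.toFinset.card = n := by
      rw [← hcard, Set.ncard_eq_toFinset_card _ hfin]
    simp only [hS]
    omega
  obtain ⟨j0, ⟨hj0i, hj0neg⟩, hj0max⟩ :=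
    Int.exists_greatest_of_bdd (P := fun j => j < i ∧ S j < 0)
      ⟨i, fun z hz => le_of_lt hz.1⟩ hneg
  -- j0 + 1 < i
  have hj1i : j0 + 1 < i := by
    rcases lt_or_eq_of_le (by omega : j0 + 1 ≤ i) with h | h
    · exact h
    · exfalso
      have := hstep j0 hj0i
      rw [h] at this
      have hbgi : bg f i = 1 := by unfold bg; simp [hi]
      omega
  have hS1 : 0 ≤ S (j0 + 1) := by
    by_contra h
    have := hj0max (j0 + 1) ⟨hj1i, by omega⟩
    omega
  have hstep0 := hstep j0 hj0i
  have hbg1 := hbg (j0 + 1)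
  have hS1z : S (j0 + 1) = 0 := by omega
  have hbg1n : bg f (j0 + 1) = -1 := by omega
  have hfj1 : f (j0 + 1) ≠ 1 := by
    intro h; unfold bg at hbg1n; simp [h] at hbg1n
  refine ⟨j0 + 1, hj1i, hfj1, hj1i, ?_, ?_⟩
  · rw [hrmi, hsplit i le_rfl (j0 + 1) (by omega), hSi, hS1z]
    ring
  · intro s hs1 hs2
    have hSs : 0 ≤ S s := by
      by_contra h
      have := hj0max s ⟨hs2, by omega⟩
      omega
    rw [hrmi, hsplit s (by omega) (j0 + 1) (by omega), hS1z]
    omega
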